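/- Let E : B → A be a conditional expectation with Index E = 2 and β the automorphism β(b) = 2E(b) − b of B. Then the C*-basic construction C*⟨B, e_A⟩ is isomorphic to the crossed product B ⋊_β ℤ₂, via an isomorphism fixing B pointwise and sending e_A to (1/2)(W + 1), where W is the canonical unitary implementing β. -/

import Mathlib

/- Watatani-style conditional expectations, quasi-bases, and the C*-basic
construction, formalized abstractly. -/

noncomputable section

/-- A conditional expectation of a unital C*-algebra `B` onto a C*-subalgebra `A`. -/
structure CondExp (B : Type*) [NormedRing B] [StarRing B] [NormedAlgebra ℂ B] [StarModule ℂ B]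
    (A : StarSubalgebra ℂ B) where
  toFun : B →ₗ[ℂ] B
  mem_range : ∀ b, toFun b ∈ A
  fixes : ∀ a ∈ A, toFun a = a
  left_mod : ∀ a ∈ A, ∀ b, toFun (a * b) = a * toFun b
  right_mod : ∀ a ∈ A, ∀ b, toFun (b * a) = toFun b * a
  star_map : ∀ b, toFun (star b) = star (toFun b)
  pos : ∀ b, ∃ c, toFun (star b * b) = star c * c

/-- `x` is a quasi-basis for the conditional expectation `E` (with pairs `(x i, (x i)*)`). -/
def IsQuasiBasis {B : Type*} [NormedRing B] [StarRing B] [NormedAlgebra ℂ B] [StarModule ℂ B]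
    {A : StarSubalgebra ℂ B} (E : CondExp B A) {n : ℕ} (x : Fin n → B) : Prop :=
  (∀ b, ∑ i, x i * E.toFun (star (x i) * b) = b) ∧
  (∀ b, ∑ i, E.toFun (b * x i) * star (x i) = b)

/-- The C*-basic construction `C = C*⟨B, e_A⟩` of a conditional expectation `E : B → A`,
with Jones projection `e`. -/
structure BasicConstruction {B : Type*} [NormedRing B] [StarRing B] [NormedAlgebra ℂ B] [StarModule ℂ B]
    {A : StarSubalgebra ℂ B} (E : CondExp B A)
    (C : Type*) [NormedRing C] [StarRing C] [NormedAlgebra ℂ C] [StarModule ℂ C] where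
  ι : B →⋆ₐ[ℂ] C
  inj : Function.Injective ι
  e : C
  e_star : star e = e
  e_idem : e * e = e
  jones : ∀ b, e * ι b * e = ι (E.toFun b) * e
  dense : (Submodule.span ℂ {y : C | ∃ b c : B, y = ι b * e * ι c}).topologicalClosure = ⊤
  mul_e_inj : ∀ b : B, ι b * e = 0 → b = 0

/-- auxiliary: multiplication rule for a ring containing a copy of `B` and a symmetry `U`
implementing an automorphism-like map `βf`. -/
private theorem aux_dist_mul {B R : Type*} [Ring B] [Ring R] (j : B → R) (U : R)
    (βf : B → B)
    (jadd : ∀ a b : B, j (a + b) = j a + j b)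
    (jmul : ∀ a b : B, j (a * b) = j a * j b)
    (hU : U * U = 1) (hUj : ∀ b : B, U * j b = j (βf b) * U)
    (b₁ b₂ c₁ c₂ : B) :
    (j b₁ + j b₂ * U) * (j c₁ + j c₂ * U)
      = j (b₁ * c₁ + b₂ * βf c₂) + j (b₁ * c₂ + b₂ * βf c₁) * U := by
  have h1 : j b₂ * U * j c₁ = j (b₂ * βf c₁) * U := by
    rw [mul_assoc, hUj, ← mul_assoc, ← jmul]
  have h2 : j b₂ * U * (j c₂ * U) = j (b₂ * βf c₂) := by
    rw [mul_assoc, ← mul_assoc U, hUj, mul_assoc (j (βf c₂)), hU, mul_one, ← jmul]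
  have h3 : j b₁ * (j c₂ * U) = j (b₁ * c₂) * U := by rw [← mul_assoc, ← jmul]
  rw [add_mul, mul_add, mul_add, jadd, jadd, add_mul, ← jmul b₁ c₁, h1, h2, h3]
  abel

/-- auxiliary: star rule. -/
private theorem aux_dist_star {B R : Type*} [Ring B] [StarRing B] [Ring R] [StarRing R]
    (j : B → R) (U : R) (βf : B → B)
    (jstar : ∀ b : B, j (star b) = star (j b))
    (hU1 : star U = U) (hUj : ∀ b : B, U * j b = j (βf b) * U)
    (b₁ b₂ : B) :
    star (j b₁ + j b₂ * U) = j (star b₁) + j (βf (star b₂)) * U := by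
  rw [star_add, star_mul, hU1, ← jstar b₁, ← jstar b₂, hUj]

/-- the basic construction `C*⟨B,e_A⟩` is isomorphic to the crossed product
`B ⋊_β ℤ₂` (presented by an implementing self-adjoint unitary `W` with `Ad(W)|_B = β`,
`β(b) = 2E(b) − b`), via an isomorphism fixing `B` pointwise and sending
`e_A` to `(1/2)(W + 1)`. -/
theorem basic_construction_iso_crossed_product
    {B C : Type*} [NormedRing B] [StarRing B] [CStarRing B] [NormedAlgebra ℂ B]
    [StarModule ℂ B] [CompleteSpace B]
    [NormedRing C] [StarRing C] [CStarRing C] [NormedAlgebra ℂ C]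
    [StarModule ℂ C] [CompleteSpace C]
    {A : StarSubalgebra ℂ B} (E : CondExp B A)
    {n : ℕ} (x : Fin n → B) (hx : IsQuasiBasis E x)
    (hidx : ∑ i, x i * star (x i) = (2 : B))
    (bc : BasicConstruction E C)
    (Et : C →ₗ[ℂ] B)
    (hEt : ∀ b c : B, Et (bc.ι b * bc.e * bc.ι c) = ((2 : ℂ))⁻¹ • (b * c))
    -- the crossed product D = B ⋊_β ℤ₂ with canonical unitary W
    {D : Type*} [NormedRing D] [StarRing D] [CStarRing D] [NormedAlgebra ℂ D]
    [StarModule ℂ D] [CompleteSpace D]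
    (ι' : B →⋆ₐ[ℂ] D) (hι' : Function.Injective ι')
    (W : D) (hW1 : star W = W) (hW2 : W * W = 1)
    (hWb : ∀ b : B, W * ι' b * W = ι' (2 * E.toFun b - b))
    (hdecomp : ∀ d : D, ∃ b₁ b₂ : B, d = ι' b₁ + ι' b₂ * W)
    (huniq : ∀ b₁ b₂ : B, ι' b₁ + ι' b₂ * W = 0 → b₁ = 0 ∧ b₂ = 0) :
    ∃ θ : C ≃⋆ₐ[ℂ] D,
      (∀ b : B, θ (bc.ι b) = ι' b) ∧ θ bc.e = ((2 : ℂ))⁻¹ • (W + 1) := by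
  classical
  obtain ⟨hx1, hx2⟩ := hx
  -- the order two automorphism β
  set βf : B → B := fun b => 2 * E.toFun b - b with hβf
  have hβapp : ∀ b : B, βf b = 2 * E.toFun b - b := fun b => by rw [hβf]
  have cancel2 : ∀ y z : B, y + y = z + z → y = z := by
    intro y z h
    have h2 : (2:ℂ) • y = (2:ℂ) • z := by rw [two_smul, two_smul]; exact h
    calc y = (2:ℂ)⁻¹ • ((2:ℂ) • y) := by
            rw [smul_smul, show (2:ℂ)⁻¹ * 2 = 1 by norm_num, one_smul]
      _ = (2:ℂ)⁻¹ • ((2:ℂ) • z) := by rw [h2]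
      _ = z := by rw [smul_smul, show (2:ℂ)⁻¹ * 2 = 1 by norm_num, one_smul]
  have hEE : ∀ b, E.toFun (E.toFun b) = E.toFun b := fun b => E.fixes _ (E.mem_range b)
  have hWW : ∀ y : D, W * (W * y) = y := by intro y; rw [← mul_assoc, hW2, one_mul]
  have hWl : ∀ b : B, W * ι' b = ι' (βf b) * W := by
    intro b
    have h1 : W * ι' b * (W * W) = ι' (βf b) * W := by
      rw [← mul_assoc, hWb b, hβapp]
    rw [hW2, mul_one] at h1
    exact h1
  have hβmul : ∀ b c : B, βf (b * c) = βf b * βf c := by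
    intro b c
    apply hι'
    have h0 : ∀ b : B, ι' (βf b) = W * ι' b * W := by
      intro b; rw [hβapp]; exact (hWb b).symm
    rw [h0 (b * c), map_mul, map_mul ι' (βf b) (βf c), h0 b, h0 c]
    simp only [mul_assoc]
    rw [hWW]
  have hβfix : ∀ b : B, βf b = b → E.toFun b = b := by
    intro b hb
    rw [hβapp] at hb
    have h2 : E.toFun b + E.toFun b = b + b := by
      have h3 := sub_eq_iff_eq_add.mp hb
      rw [two_mul] at h3
      -- h3 : E b + E b = b + b
      exact h3
    exact cancel2 _ _ h2
  have hker : ∀ k l : B, E.toFun k = 0 → E.toFun l = 0 → E.toFun (k * l) = k * l := by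
    intro k l hk hl
    apply hβfix
    rw [hβmul k l, hβapp, hβapp, hk, hl]
    simp
  -- associativity helpers in C
  have key1 : ∀ b bb cc : B, bc.ι b * (bc.ι bb * bc.e * bc.ι cc) = bc.ι (b * bb) * bc.e * bc.ι cc := by
    intro b bb cc
    simp only [← mul_assoc, ← map_mul]
  have key2 : ∀ b bb cc : B,
      (bc.ι b * bc.e) * (bc.ι bb * bc.e * bc.ι cc) = bc.ι (b * E.toFun bb) * bc.e * bc.ι cc := by
    intro b bb cc
    have h : bc.ι b * (bc.e * bc.ι bb * bc.e) * bc.ι cc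
        = bc.ι b * (bc.ι (E.toFun bb) * bc.e) * bc.ι cc := by rw [bc.jones]
    calc (bc.ι b * bc.e) * (bc.ι bb * bc.e * bc.ι cc)
        = bc.ι b * (bc.e * bc.ι bb * bc.e) * bc.ι cc := by simp only [mul_assoc]
      _ = bc.ι b * (bc.ι (E.toFun bb) * bc.e) * bc.ι cc := h
      _ = bc.ι (b * E.toFun bb) * bc.e * bc.ι cc := by simp only [← mul_assoc, ← map_mul]
  have key3 : ∀ bb cc : B,
      bc.e * (bc.ι bb * bc.e * bc.ι cc) = bc.ι (E.toFun bb) * bc.e * bc.ι cc := by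
    intro bb cc
    have h := key2 1 bb cc
    simpa using h
  -- density principle
  have L0 : ∀ u : C, (∀ b c : B, u * (bc.ι b * bc.e * bc.ι c) = 0) → u = 0 := by
    intro u hu
    have hmul : ∀ y : C,
        y ∈ (Submodule.span ℂ {y : C | ∃ b c : B, y = bc.ι b * bc.e * bc.ι c}).topologicalClosure
        → u * y = 0 := by
      intro y hy
      have hker' : (Submodule.span ℂ {y : C | ∃ b c : B, y = bc.ι b * bc.e * bc.ι c})
          ≤ LinearMap.ker ((ContinuousLinearMap.mul ℂ C) u : C →ₗ[ℂ] C) := by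
        rw [Submodule.span_le]
        rintro z ⟨b, c, rfl⟩
        exact hu b c
      have hcl : IsClosed ((LinearMap.ker ((ContinuousLinearMap.mul ℂ C) u : C →ₗ[ℂ] C) : Submodule ℂ C) : Set C) :=
        ContinuousLinearMap.isClosed_ker _
      exact (Submodule.topologicalClosure_minimal _ hker' hcl) hy
    have h1 := hmul 1 (by rw [bc.dense]; trivial)
    rwa [mul_one] at h1
  -- e commutes with elements of A
  have hcomm : ∀ a : B, a ∈ A → bc.e * bc.ι a = bc.ι a * bc.e := by
    intro a ha
    refine sub_eq_zero.mp (L0 _ ?_)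
    intro b c
    rw [sub_mul, mul_assoc bc.e (bc.ι a), key1, key3, key2, E.left_mod a ha b, sub_self]
  -- the index-2 identity for elements in the kernel of E
  have hstark : ∀ k : B, E.toFun k = 0 → bc.e * bc.ι k + bc.ι k * bc.e = bc.ι k := by
    intro k hk
    have h := L0 (bc.ι k - bc.e * bc.ι k - bc.ι k * bc.e) ?_
    · rw [sub_sub] at h
      exact (sub_eq_zero.mp h).symm
    intro b c
    have hbE : E.toFun (k * b) = k * b - k * E.toFun b := by
      have h1 : E.toFun (k * E.toFun b) = 0 := by
        rw [E.right_mod _ (E.mem_range b), hk, zero_mul]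
      have h2 : E.toFun (k * (b - E.toFun b)) = k * (b - E.toFun b) := by
        apply hker k _ hk
        rw [map_sub, hEE, sub_self]
      have h3 : k * (b - E.toFun b) + k * E.toFun b = k * b := by rw [mul_sub]; abel
      calc E.toFun (k * b) = E.toFun (k * (b - E.toFun b) + k * E.toFun b) := by rw [h3]
        _ = E.toFun (k * (b - E.toFun b)) + E.toFun (k * E.toFun b) := by rw [map_add]
        _ = k * (b - E.toFun b) + 0 := by rw [h1, h2]
        _ = k * b - k * E.toFun b := by rw [add_zero, mul_sub]
    have e1 : ∀ y z : B, bc.ι y * bc.e * bc.ι c - bc.ι z * bc.e * bc.ι c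
        = bc.ι (y - z) * bc.e * bc.ι c := by
      intro y z
      rw [← sub_mul, ← sub_mul, ← map_sub]
    rw [sub_mul, sub_mul, mul_assoc bc.e (bc.ι k), key1, key3, key2, hbE, e1, e1,
      show k * b - (k * b - k * E.toFun b) - k * E.toFun b = (0:B) by abel,
      map_zero, zero_mul, zero_mul]
  -- the quasi-basis sum is the identity
  have hu1 : (∑ i, bc.ι (x i) * bc.e * bc.ι (star (x i))) = 1 := by
    have h := L0 ((∑ i, bc.ι (x i) * bc.e * bc.ι (star (x i))) - 1) ?_
    · exact sub_eq_zero.mp h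
    intro b c
    rw [sub_mul, Finset.sum_mul]
    have hterm : ∀ i ∈ (Finset.univ : Finset (Fin n)),
        (bc.ι (x i) * bc.e * bc.ι (star (x i))) * (bc.ι b * bc.e * bc.ι c)
          = bc.ι (x i * E.toFun (star (x i) * b)) * bc.e * bc.ι c := by
      intro i _
      rw [mul_assoc (bc.ι (x i) * bc.e), key1, key2]
    rw [Finset.sum_congr rfl hterm, ← Finset.sum_mul, ← Finset.sum_mul, ← map_sum,
      hx1 b, one_mul, sub_self]
  -- the full index-2 identity
  have hstar : ∀ b : B, bc.e * bc.ι b + bc.ι b * bc.e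
      = bc.ι b + bc.ι (E.toFun b) * bc.e + bc.ι (E.toFun b) * bc.e - bc.ι (E.toFun b) := by
    intro b
    have hk : E.toFun (b - E.toFun b) = 0 := by rw [map_sub, hEE, sub_self]
    have h1 := hstark _ hk
    have h2 := hcomm (E.toFun b) (E.mem_range b)
    rw [map_sub, mul_sub, sub_mul, h2] at h1
    have h3 : bc.e * bc.ι b + bc.ι b * bc.e
        = (bc.e * bc.ι b - bc.ι (E.toFun b) * bc.e + (bc.ι b * bc.e - bc.ι (E.toFun b) * bc.e))
          + (bc.ι (E.toFun b) * bc.e + bc.ι (E.toFun b) * bc.e) := by abel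
    rw [h3, h1]
    abel
  -- the symmetry V = 2e - 1 in C
  set V : C := bc.e + bc.e - 1 with hVdef
  have hVb : ∀ b : B, V * bc.ι b = bc.ι (βf b) * V := by
    intro b
    have hR := eq_sub_of_add_eq (hstar b)
    rw [hβapp b, hVdef, two_mul]
    simp only [map_sub, map_add, add_mul, sub_mul, mul_add, mul_sub, one_mul, mul_one]
    simp only [hR]
    abel
  have hVV : V * V = 1 := by
    rw [hVdef]
    simp only [add_mul, sub_mul, mul_add, mul_sub, one_mul, mul_one, bc.e_idem]
    abel
  have hVstar : star V = V := by
    rw [hVdef, star_sub, star_add, bc.e_star, star_one]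
  -- formula for e * ι c
  have hec : ∀ c : B, bc.e * bc.ι c = bc.ι (c - E.toFun c) + bc.ι (βf c) * bc.e := by
    intro c
    have hk : E.toFun (c - E.toFun c) = 0 := by rw [map_sub, hEE, sub_self]
    have h1 := hstark _ hk
    have h2 := hcomm (E.toFun c) (E.mem_range c)
    rw [map_sub, mul_sub, sub_mul, h2] at h1
    rw [hβapp, two_mul, map_sub, map_sub, map_add, sub_mul, add_mul]
    have h4 : bc.e * bc.ι c = (bc.ι c - bc.ι (E.toFun c))
        - (bc.ι c * bc.e - bc.ι (E.toFun c) * bc.e) + bc.ι (E.toFun c) * bc.e := by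
      rw [← h1]; abel
    rw [h4]; abel
  -- uniqueness of decompositions in C
  have hCuniq : ∀ c₁ c₂ : B, bc.ι c₁ + bc.ι c₂ * bc.e = 0 → c₁ = 0 ∧ c₂ = 0 := by
    intro c₁ c₂ h
    have hsum : c₁ + c₂ = 0 := by
      apply bc.mul_e_inj
      have h5 : (bc.ι c₁ + bc.ι c₂ * bc.e) * bc.e = 0 := by rw [h, zero_mul]
      rw [add_mul, mul_assoc, bc.e_idem] at h5
      rw [map_add, add_mul]
      exact h5
    have hEt1 : Et (bc.ι c₁) = c₁ := by
      have hc1 : bc.ι c₁ = ∑ i, bc.ι (c₁ * x i) * bc.e * bc.ι (star (x i)) := by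
        conv_lhs => rw [← mul_one (bc.ι c₁), ← hu1, Finset.mul_sum]
        refine Finset.sum_congr rfl fun i _ => ?_
        rw [← mul_assoc, ← mul_assoc, ← map_mul]
      have hterm : ∀ i ∈ (Finset.univ : Finset (Fin n)),
          Et (bc.ι (c₁ * x i) * bc.e * bc.ι (star (x i)))
            = (2:ℂ)⁻¹ • (c₁ * (x i * star (x i))) := by
        intro i _
        rw [hEt, mul_assoc]
      rw [hc1, map_sum, Finset.sum_congr rfl hterm, ← Finset.smul_sum, ← Finset.mul_sum,
        hidx, mul_two, ← two_smul ℂ c₁, smul_smul, show (2:ℂ)⁻¹ * 2 = 1 by norm_num, one_smul]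
    have hEt2 : Et (bc.ι c₂ * bc.e) = (2:ℂ)⁻¹ • c₂ := by
      have h6 : bc.ι c₂ * bc.e = bc.ι c₂ * bc.e * bc.ι 1 := by rw [map_one, mul_one]
      rw [h6, hEt, mul_one]
    have h0 : c₁ + (2:ℂ)⁻¹ • c₂ = 0 := by
      have h7 := congrArg Et h
      rwa [map_add, map_zero, hEt1, hEt2] at h7
    have hc2 : c₂ = -c₁ := eq_neg_of_add_eq_zero_right hsum
    have hc10 : c₁ = 0 := by
      rw [hc2] at h0
      have h8 : (2:ℂ)⁻¹ • c₁ = 0 := by rw [← h0]; module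
      have h9 := smul_eq_zero.mp h8
      simpa using h9.resolve_left (by norm_num)
    exact ⟨hc10, by rw [hc2, hc10, neg_zero]⟩
  -- the decomposition of D
  choose f1 f2 hdec using hdecomp
  have hdecomp' : ∀ d : D, ∃ b₁ b₂ : B, d = ι' b₁ + ι' b₂ * W := fun d => ⟨f1 d, f2 d, hdec d⟩
  have huniq' : ∀ b₁ b₂ c₁ c₂ : B,
      ι' b₁ + ι' b₂ * W = ι' c₁ + ι' c₂ * W → b₁ = c₁ ∧ b₂ = c₂ := by
    intro b₁ b₂ c₁ c₂ h
    have h1 : (ι' b₁ + ι' b₂ * W) - (ι' c₁ + ι' c₂ * W) = 0 := by rw [h, sub_self]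
    have h2 : ι' (b₁ - c₁) + ι' (b₂ - c₂) * W = 0 := by
      rw [map_sub, map_sub, sub_mul, ← h1]; abel
    obtain ⟨ha, hb⟩ := huniq _ _ h2
    exact ⟨sub_eq_zero.mp ha, sub_eq_zero.mp hb⟩
  -- the map φ : D → C
  set φ : D → C := fun d => bc.ι (f1 d) + bc.ι (f2 d) * V with hφdef
  have φspec : ∀ b₁ b₂ : B, φ (ι' b₁ + ι' b₂ * W) = bc.ι b₁ + bc.ι b₂ * V := by
    intro b₁ b₂
    obtain ⟨h1, h2⟩ := huniq' _ _ b₁ b₂ (hdec (ι' b₁ + ι' b₂ * W)).symm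
    show bc.ι (f1 (ι' b₁ + ι' b₂ * W)) + bc.ι (f2 (ι' b₁ + ι' b₂ * W)) * V = _
    rw [h1, h2]
  have hφ0 : ∀ d : D, φ d = 0 → d = 0 := by
    intro d h
    simp only [hφdef] at h
    have h2 : bc.ι (f1 d - f2 d) + bc.ι (f2 d + f2 d) * bc.e = 0 := by
      rw [map_sub, map_add, add_mul, ← h, hVdef, mul_sub, mul_add, mul_one]
      abel
    obtain ⟨ha, hb⟩ := hCuniq _ _ h2
    have hf2 : f2 d = 0 := cancel2 _ 0 (by rw [hb, add_zero])
    have hf1 : f1 d = 0 := by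
      have := sub_eq_zero.mp ha
      rw [this, hf2]
    rw [hdec d, hf1, hf2]
    simp
  -- properties of φ
  have φone : φ (1:D) = 1 := by
    have h1 : (1:D) = ι' 1 + ι' 0 * W := by rw [map_one, map_zero, zero_mul, add_zero]
    conv_lhs => rw [h1, φspec]
    rw [map_one, map_zero, zero_mul, add_zero]
  have φzero : φ (0:D) = 0 := by
    have h1 : (0:D) = ι' 0 + ι' 0 * W := by rw [map_zero, zero_mul, add_zero]
    conv_lhs => rw [h1, φspec]
    simp
  have φmul : ∀ d d' : D, φ (d * d') = φ d * φ d' := by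
    intro d d'
    obtain ⟨b₁, b₂, rfl⟩ := hdecomp' d
    obtain ⟨c₁, c₂, rfl⟩ := hdecomp' d'
    rw [aux_dist_mul (⇑ι') W βf (map_add ι') (map_mul ι') hW2 hWl, φspec, φspec, φspec,
      aux_dist_mul (⇑bc.ι) V βf (map_add bc.ι) (map_mul bc.ι) hVV hVb]
  have φadd : ∀ d d' : D, φ (d + d') = φ d + φ d' := by
    intro d d'
    obtain ⟨b₁, b₂, rfl⟩ := hdecomp' d
    obtain ⟨c₁, c₂, rfl⟩ := hdecomp' d'
    have h1 : (ι' b₁ + ι' b₂ * W) + (ι' c₁ + ι' c₂ * W)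
        = ι' (b₁ + c₁) + ι' (b₂ + c₂) * W := by
      rw [map_add, map_add, add_mul]; abel
    rw [h1, φspec, φspec, φspec, map_add, map_add, add_mul]
    abel
  have φcommutes : ∀ z : ℂ, φ (algebraMap ℂ D z) = algebraMap ℂ C z := by
    intro z
    have h1 : algebraMap ℂ D z = ι' (algebraMap ℂ B z) + ι' 0 * W := by
      rw [map_zero, zero_mul, add_zero, AlgHomClass.commutes ι' z]
    conv_lhs => rw [h1, φspec]
    rw [map_zero, zero_mul, add_zero, AlgHomClass.commutes bc.ι z]
  have φstar : ∀ d : D, φ (star d) = star (φ d) := by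
    intro d
    obtain ⟨b₁, b₂, rfl⟩ := hdecomp' d
    rw [aux_dist_star (⇑ι') W βf (map_star ι') hW1 hWl, φspec, φspec,
      aux_dist_star (⇑bc.ι) V βf (map_star bc.ι) hVstar hVb]
  -- bundle φ as a star algebra homomorphism
  let Φ : D →⋆ₐ[ℂ] C :=
    { toFun := φ
      map_one' := φone
      map_mul' := φmul
      map_zero' := φzero
      map_add' := φadd
      commutes' := φcommutes
      map_star' := φstar }
  have hΦφ : ∀ d : D, Φ d = φ d := fun d => rfl
  have hinj : Function.Injective (⇑Φ) := by
    intro d d' h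
    have h0 : Φ (d - d') = 0 := by rw [map_sub, h, sub_self]
    have h1 : φ (d - d') = 0 := h0
    have := hφ0 _ h1
    exact sub_eq_zero.mp this
  -- C*-algebra instances and isometry
  letI : CStarAlgebra C := ⟨⟩
  letI : CStarAlgebra D := ⟨⟩
  have hiso : Isometry (⇑Φ) := NonUnitalStarAlgHom.isometry Φ hinj
  -- surjectivity via density
  have hgen : {y : C | ∃ b c : B, y = bc.ι b * bc.e * bc.ι c}
      ⊆ ((LinearMap.range Φ.toAlgHom.toLinearMap : Submodule ℂ C) : Set C) := by
    rintro y ⟨b, c, rfl⟩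
    have hbc : bc.ι b * bc.e * bc.ι c
        = bc.ι (b * (c - E.toFun c)) + bc.ι (b * βf c) * bc.e := by
      rw [mul_assoc, hec c, mul_add, ← map_mul, ← mul_assoc, ← map_mul]
    refine ⟨ι' (b * (c - E.toFun c) + (2:ℂ)⁻¹ • (b * βf c)) + ι' ((2:ℂ)⁻¹ • (b * βf c)) * W, ?_⟩
    show φ _ = _
    rw [φspec, hbc]
    have ιsmul : ∀ (z : ℂ) (w : B), bc.ι (z • w) = z • bc.ι w := fun z w => map_smul bc.ι z w
    simp only [map_add, ιsmul, hVdef, mul_sub, mul_add, mul_one, smul_mul_assoc]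
    module
  have hMclosed : IsClosed ((LinearMap.range Φ.toAlgHom.toLinearMap : Submodule ℂ C) : Set C) := by
    have hrange : ((LinearMap.range Φ.toAlgHom.toLinearMap : Submodule ℂ C) : Set C)
        = Set.range (⇑Φ) := by
      ext z
      constructor
      · rintro ⟨d, rfl⟩; exact ⟨d, rfl⟩
      · rintro ⟨d, rfl⟩; exact ⟨d, rfl⟩
    rw [hrange]
    exact hiso.isClosedEmbedding.isClosed_range
  have hsurj : Function.Surjective (⇑Φ) := by
    intro y
    have hle : (Submodule.span ℂ {y : C | ∃ b c : B, y = bc.ι b * bc.e * bc.ι c}).topologicalClosure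
        ≤ LinearMap.range Φ.toAlgHom.toLinearMap :=
      Submodule.topologicalClosure_minimal _ (Submodule.span_le.mpr hgen) hMclosed
    rw [bc.dense] at hle
    obtain ⟨d, hd⟩ := hle (Submodule.mem_top (x := y))
    exact ⟨d, hd⟩
  -- assemble the isomorphism
  let eqv : D ≃⋆ₐ[ℂ] C := StarAlgEquiv.ofBijective Φ ⟨hinj, hsurj⟩
  have heqv : ∀ d : D, eqv d = Φ d := fun d => rfl
  refine ⟨eqv.symm, ?_, ?_⟩
  · intro b
    have hEb : eqv (ι' b) = bc.ι b := by
      rw [heqv]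
      show φ (ι' b) = bc.ι b
      conv_lhs => rw [show ι' b = ι' b + ι' 0 * W by rw [map_zero, zero_mul, add_zero], φspec]
      rw [map_zero, zero_mul, add_zero]
    rw [← hEb, eqv.symm_apply_apply]
  · have hΦW : Φ W = V := by
      have h1 : W = ι' 0 + ι' 1 * W := by rw [map_zero, map_one, zero_add, one_mul]
      show φ W = V
      rw [h1, φspec, map_zero, map_one, zero_add, one_mul]
    have h2 : Φ ((2:ℂ)⁻¹ • (W + 1)) = (2:ℂ)⁻¹ • (V + 1) := by
      rw [map_smul Φ, map_add, map_one, hΦW]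
    have hEe : eqv ((2:ℂ)⁻¹ • (W + 1)) = bc.e := by
      rw [heqv, h2, hVdef, sub_add_cancel, ← two_smul ℂ bc.e, smul_smul,
        show (2:ℂ)⁻¹ * 2 = 1 by norm_num, one_smul]
    rw [← hEe, eqv.symm_apply_apply]

end
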